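/- The polynomial P(t) = ∏_{p=1}^{r} (1 − t^p)^{n_p} has at least d + 1 nonzero coefficients, where d = n₁ + ⋯ + n_r. -/

import Mathlib

open Polynomial Finset

/-- `d = n₁ + ⋯ + n_r`. -/
def dTot (r : ℕ) (np : ℕ → ℕ) : ℕ := ∑ p ∈ Finset.Icc 1 r, np p

/-- `P(t) = ∏_{p=1}^{r} (1 − t^p)^{n_p}`. -/
noncomputable def Ppoly (r : ℕ) (np : ℕ → ℕ) : Polynomial ℚ :=
  ∏ p ∈ Finset.Icc 1 r, (1 - X ^ p) ^ np p

lemma support_mul_X' (g : ℚ[X]) : (g * X).support = g.support.image (· + 1) := by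
  ext n
  cases n with
  | zero => simp [mem_support_iff, coeff_mul_X_zero]
  | succ m => simp [mem_support_iff, coeff_mul_X]

lemma support_deriv_image (f : ℚ[X]) :
    (derivative f).support.image (· + 1) = f.support.erase 0 := by
  ext m
  simp only [Finset.mem_image, Finset.mem_erase]
  constructor
  · rintro ⟨n, hn, rfl⟩
    rw [mem_support_derivative] at hn
    exact ⟨Nat.succ_ne_zero n, hn⟩
  · rintro ⟨hm, hmem⟩
    obtain ⟨k, rfl⟩ := Nat.exists_eq_succ_of_ne_zero hm
    exact ⟨k, (mem_support_derivative (p := f) (n := k)).mpr hmem, rfl⟩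

lemma key (d : ℕ) (f : ℚ[X]) (hf : f ≠ 0) (hdvd : (X - 1 : ℚ[X]) ^ d ∣ f) :
    d + 1 ≤ f.support.card := by
  induction d generalizing f with
  | zero => simpa using Finset.card_pos.mpr (nonempty_support_iff.mpr hf)
  | succ d ih =>
    suffices H : ∀ n : ℕ, ∀ f : ℚ[X], f.natDegree ≤ n → f ≠ 0 →
        (X - 1 : ℚ[X]) ^ (d + 1) ∣ f → d + 2 ≤ f.support.card from
      H f.natDegree f le_rfl hf hdvd
    intro n
    induction n with
    | zero =>
      intro f hdeg hf hdvd
      exfalso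
      have h1 : (X - 1 : ℚ[X]).natDegree = 1 := by
        simpa using natDegree_X_sub_C (1 : ℚ)
      have := Polynomial.natDegree_le_of_dvd hdvd hf
      rw [natDegree_pow, h1, mul_one] at this
      omega
    | succ n ihn =>
      intro f hdeg hf hdvd
      have hdegf : d + 1 ≤ f.natDegree := by
        have h1 : (X - 1 : ℚ[X]).natDegree = 1 := by
          simpa using natDegree_X_sub_C (1 : ℚ)
        have := Polynomial.natDegree_le_of_dvd hdvd hf
        rw [natDegree_pow, h1, mul_one] at this
        omega
      by_cases h0 : f.coeff 0 = 0
      · -- f = g * X, strip the factor X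
        obtain ⟨g, hg⟩ := Polynomial.X_dvd_iff.mpr h0
        rw [mul_comm] at hg
        have hg0 : g ≠ 0 := by rintro rfl; simp at hg; exact hf hg
        have hcop : IsCoprime ((X - 1 : ℚ[X]) ^ (d + 1)) X := by
          apply IsCoprime.pow_left
          exact ⟨-1, 1, by ring⟩
        have hdvdg : (X - 1 : ℚ[X]) ^ (d + 1) ∣ g := by
          have : (X - 1 : ℚ[X]) ^ (d + 1) ∣ g * X := hg ▸ hdvd
          exact hcop.dvd_of_dvd_mul_right this
        have hdegg : g.natDegree ≤ n := by
          have : f.natDegree = g.natDegree + 1 := by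
            rw [hg]; rw [natDegree_mul hg0 X_ne_zero, natDegree_X]
          omega
        have := ihn g hdegg hg0 hdvdg
        have hcard : f.support.card = g.support.card := by
          rw [hg, support_mul_X']
          exact Finset.card_image_of_injective _ (add_left_injective 1)
        omega
      · -- use the derivative
        have hd' : (X - 1 : ℚ[X]) ^ d ∣ derivative f :=
          pow_sub_one_dvd_derivative_of_pow_dvd (n := d + 1) hdvd
        have hdne : derivative f ≠ 0 := by
          intro h
          have := natDegree_eq_zero_of_derivative_eq_zero h
          omega
        have hcard : d + 1 ≤ (derivative f).support.card := ih _ hdne hd'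
        have h0mem : (0 : ℕ) ∈ f.support := mem_support_iff.mpr h0
        have him := support_deriv_image f
        have hci : ((derivative f).support.image (· + 1)).card
            = (derivative f).support.card :=
          Finset.card_image_of_injective _ (add_left_injective 1)
        have hce : (f.support.erase 0).card = f.support.card - 1 :=
          Finset.card_erase_of_mem h0mem
        have hpos : 1 ≤ f.support.card := Finset.card_pos.mpr ⟨0, h0mem⟩
        rw [him, hce] at hci
        omega

/-- The polynomial `P(t) = ∏_{p=1}^{r} (1 − t^p)^{n_p}` has at least `d + 1` nonzero
coefficients, where `d = n₁ + ⋯ + n_r`. -/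
theorem stmt2 (r : ℕ) (hr : 1 ≤ r) (np : ℕ → ℕ) :
    dTot r np + 1 ≤ (Ppoly r np).support.card := by
  have hne : Ppoly r np ≠ 0 := by
    intro h
    have : (Ppoly r np).eval 0 = 1 := by
      rw [Ppoly, eval_prod]
      apply Finset.prod_eq_one
      intro p hp
      rw [Finset.mem_Icc] at hp
      simp [zero_pow (by omega : p ≠ 0)]
    rw [h] at this
    simp at this
  have hdvd : (X - 1 : ℚ[X]) ^ (dTot r np) ∣ Ppoly r np := by
    rw [dTot, Ppoly, ← Finset.prod_pow_eq_pow_sum]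
    apply Finset.prod_dvd_prod_of_dvd
    intro p hp
    apply pow_dvd_pow_of_dvd
    have : (X - 1 : ℚ[X]) ∣ X ^ p - 1 ^ p := sub_dvd_pow_sub_pow X 1 p
    rw [one_pow] at this
    have := this.neg_right
    rwa [neg_sub] at this
  exact key _ _ hne hdvd
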